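/- arXiv:1411.1340 — 5 statements merged into one kernel-verified Lean document; each statement's English description precedes it below -/
import Mathlib

section
/- Let V : ℝ^d → ℝ be a C^1 function such that b := -∇V satisfies the one-sided Lipschitz condition (b(x)-b(y), x-y) ≤ λ|x-y|² for all x,y and some λ ≥ 0, and suppose x ↦ exp(-V(x)) is integrable on ℝ^d. Then for every nonzero vector v ∈ ℝ^d there exists z ∈ ℝ^d such that V(z) < (V(z+v) + V(z-v))/2. -/
open MeasureTheory

open ENNReal

theorem stmt0 {d : ℕ} (V : EuclideanSpace ℝ (Fin d) → ℝ) (lam : ℝ)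
    (hV : ContDiff ℝ 1 V) (hlam : 0 ≤ lam)
    (hb : ∀ x y : EuclideanSpace ℝ (Fin d),
      (inner ℝ ((-gradient V x) - (-gradient V y)) (x - y) : ℝ) ≤ lam * ‖x - y‖ ^ 2)
    (hint : Integrable (fun x => Real.exp (-V x))
      (volume : Measure (EuclideanSpace ℝ (Fin d)))) :
    ∀ v : EuclideanSpace ℝ (Fin d), v ≠ 0 →
      ∃ z : EuclideanSpace ℝ (Fin d), V z < (V (z + v) + V (z - v)) / 2 := by
  intro v hv
  classical
  by_contra hcon
  push_neg at hcon
  -- midpoint concavity with step v everywhere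
  have H : ∀ z : EuclideanSpace ℝ (Fin d), V (z + v) + V (z - v) ≤ 2 * V z := by
    intro z
    have := hcon z
    linarith
  -- step differences are nonincreasing along v
  have hstep : ∀ x : EuclideanSpace ℝ (Fin d), V (x + v + v) - V (x + v) ≤ V (x + v) - V x := by
    intro x
    have h := H (x + v)
    have e : x + v - v = x := by abel
    rw [e] at h
    linarith
  have hΔn : ∀ (x : EuclideanSpace ℝ (Fin d)) (n : ℕ),
      V (x + (n : ℝ) • v + v) - V (x + (n : ℝ) • v) ≤ V (x + v) - V x := by
    intro x n
    induction n with
    | zero => simp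
    | succ n ih =>
      have e : x + ((n + 1 : ℕ) : ℝ) • v = (x + (n : ℝ) • v) + v := by
        push_cast
        rw [add_smul, one_smul]
        abel
      rw [e]
      exact le_trans (hstep (x + (n : ℝ) • v)) ih
  have keyplus : ∀ x : EuclideanSpace ℝ (Fin d), V (x + v) ≤ V x → ∀ n : ℕ, V (x + (n : ℝ) • v) ≤ V x := by
    intro x hx n
    induction n with
    | zero => simp
    | succ n ih =>
      have e : x + ((n + 1 : ℕ) : ℝ) • v = (x + (n : ℝ) • v) + v := by
        push_cast
        rw [add_smul, one_smul]
        abel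
      rw [e]
      have h1 := hΔn x n
      linarith
  have keyminus : ∀ x : EuclideanSpace ℝ (Fin d), V x ≤ V (x + v) → ∀ n : ℕ, V (x - (n : ℝ) • v) ≤ V x := by
    intro x hx n
    induction n with
    | zero => simp
    | succ n ih =>
      have h1 := hΔn (x - ((n + 1 : ℕ) : ℝ) • v) (n + 1)
      have e1 : x - ((n + 1 : ℕ) : ℝ) • v + ((n + 1 : ℕ) : ℝ) • v = x := by abel
      have e2 : x - ((n + 1 : ℕ) : ℝ) • v + v = x - (n : ℝ) • v := by
        push_cast
        rw [add_smul, one_smul]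
        abel
      rw [e1, e2] at h1
      linarith
  have key : ∀ (x : EuclideanSpace ℝ (Fin d)) (n : ℕ), V (x + (n : ℝ) • v) ≤ V x ∨ V (x - (n : ℝ) • v) ≤ V x := by
    intro x n
    rcases le_total (V (x + v)) (V x) with h | h
    · exact Or.inl (keyplus x h n)
    · exact Or.inr (keyminus x h n)
  -- measure theory
  set g : EuclideanSpace ℝ (Fin d) → ℝ≥0∞ := fun x => ENNReal.ofReal (Real.exp (-V x)) with hg
  have hVc : Continuous V := hV.continuous
  have hgmeas : Measurable g := by
    exact ENNReal.measurable_ofReal.comp ((Real.continuous_exp.comp hVc.neg).measurable)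
  set I : ℝ≥0∞ := ∫⁻ x, g x with hIdef
  have hI : I ≠ ⊤ := by
    have h := hint.hasFiniteIntegral
    rw [HasFiniteIntegral] at h
    have : ∀ x : EuclideanSpace ℝ (Fin d), ‖Real.exp (-V x)‖ₑ = g x := by
      intro x
      exact Real.enorm_eq_ofReal (Real.exp_nonneg _)
    simp only [this] at h
    exact h.ne
  -- shift lemma
  have hshift : ∀ a : EuclideanSpace ℝ (Fin d), ∫⁻ x in Metric.closedBall (0 : EuclideanSpace ℝ (Fin d)) 1, g (x + a)
      = ∫⁻ y in Metric.closedBall a 1, g y := by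
    intro a
    have hmem : ∀ x : EuclideanSpace ℝ (Fin d), x + a ∈ Metric.closedBall a 1 ↔ x ∈ Metric.closedBall (0 : EuclideanSpace ℝ (Fin d)) 1 := by
      intro x
      simp [Metric.mem_closedBall, dist_eq_norm]
    calc ∫⁻ x in Metric.closedBall (0 : EuclideanSpace ℝ (Fin d)) 1, g (x + a)
        = ∫⁻ x, (Metric.closedBall (0 : EuclideanSpace ℝ (Fin d)) 1).indicator (fun x => g (x + a)) x := by
          rw [lintegral_indicator (measurableSet_closedBall)]
      _ = ∫⁻ x, (Metric.closedBall a 1).indicator g (x + a) := by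
          congr 1
          ext x
          rw [Set.indicator_apply, Set.indicator_apply, hmem]
      _ = ∫⁻ y, (Metric.closedBall a 1).indicator g y :=
          lintegral_add_right_eq_self _ a
      _ = ∫⁻ y in Metric.closedBall a 1, g y := by
          rw [lintegral_indicator (measurableSet_closedBall)]
  -- bound on the unit ball
  obtain ⟨x₀, hx₀, hM'⟩ := (isCompact_closedBall (0 : EuclideanSpace ℝ (Fin d)) 1).exists_isMaxOn
    ⟨0, by simp⟩ hVc.continuousOn
  have hM : ∀ x ∈ Metric.closedBall (0 : EuclideanSpace ℝ (Fin d)) 1, V x ≤ V x₀ := hM'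
  set M : ℝ := V x₀ with hMdef
  set c : ℝ≥0∞ := ENNReal.ofReal (Real.exp (-M)) * volume (Metric.closedBall (0 : EuclideanSpace ℝ (Fin d)) 1)
    with hcdef
  have hvolpos : 0 < volume (Metric.closedBall (0 : EuclideanSpace ℝ (Fin d)) 1) :=
    lt_of_lt_of_le (Metric.measure_ball_pos volume 0 one_pos)
      (measure_mono Metric.ball_subset_closedBall)
  have hc0 : c ≠ 0 := by
    apply mul_ne_zero
    · simp [ENNReal.ofReal_eq_zero, not_le, Real.exp_pos]
    · exact hvolpos.ne'
  have hcT : c ≠ ⊤ :=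
    ENNReal.mul_ne_top ENNReal.ofReal_ne_top (measure_closedBall_lt_top).ne
  -- lower bound for each shift
  have hlow : ∀ m : ℕ, c ≤ ∫⁻ x in Metric.closedBall (0 : EuclideanSpace ℝ (Fin d)) 1,
      (g (x + (m : ℝ) • v) + g (x - (m : ℝ) • v)) := by
    intro m
    have hpt : ∀ x ∈ Metric.closedBall (0 : EuclideanSpace ℝ (Fin d)) 1,
        ENNReal.ofReal (Real.exp (-M)) ≤ g (x + (m : ℝ) • v) + g (x - (m : ℝ) • v) := by
      intro x hx
      have hVx : V x ≤ M := hM x hx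
      rcases key x m with h | h
      · refine le_trans ?_ (le_add_right le_rfl)
        exact ENNReal.ofReal_le_ofReal (Real.exp_le_exp.mpr (by linarith))
      · refine le_trans ?_ (le_add_left le_rfl)
        exact ENNReal.ofReal_le_ofReal (Real.exp_le_exp.mpr (by linarith))
    calc c = ∫⁻ _ in Metric.closedBall (0 : EuclideanSpace ℝ (Fin d)) 1, ENNReal.ofReal (Real.exp (-M)) := by
          rw [setLIntegral_const]
      _ ≤ _ := setLIntegral_mono
          (((hgmeas.comp (measurable_id.add_const _)).add
            (hgmeas.comp (measurable_id.sub_const _)))) hpt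
  -- split into two translated balls
  have hsplit : ∀ m : ℕ, ∫⁻ x in Metric.closedBall (0 : EuclideanSpace ℝ (Fin d)) 1,
      (g (x + (m : ℝ) • v) + g (x - (m : ℝ) • v))
      = (∫⁻ y in Metric.closedBall ((m : ℝ) • v) 1, g y)
        + ∫⁻ y in Metric.closedBall (-((m : ℝ) • v)) 1, g y := by
    intro m
    have hma : Measurable fun x : EuclideanSpace ℝ (Fin d) => g (x + (m : ℝ) • v) :=
      hgmeas.comp (measurable_add_const _)
    rw [lintegral_add_left hma]
    congr 1
    · exact hshift _
    · rw [← hshift (-((m : ℝ) • v))]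
      simp_rw [sub_eq_add_neg]
  -- choose N so translates are disjoint
  have hvn : 0 < ‖v‖ := norm_pos_iff.mpr hv
  obtain ⟨N, hN⟩ := exists_nat_gt (2 / ‖v‖)
  have hNv : 2 < (N : ℝ) * ‖v‖ := by
    rw [div_lt_iff₀ hvn] at hN
    linarith
  have hdist : ∀ j k : ℕ, j ≠ k →
      (2 : ℝ) < dist (((j * N : ℕ) : ℝ) • v) (((k * N : ℕ) : ℝ) • v) := by
    intro j k hjk
    rw [dist_eq_norm, ← sub_smul, norm_smul, Real.norm_eq_abs]
    have h1 : (1 : ℤ) ≤ |(j : ℤ) - (k : ℤ)| :=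
      Int.one_le_abs (sub_ne_zero.mpr (by exact_mod_cast hjk))
    have h2 : (N : ℝ) ≤ |((j * N : ℕ) : ℝ) - ((k * N : ℕ) : ℝ)| := by
      have e : ((j * N : ℕ) : ℝ) - ((k * N : ℕ) : ℝ) = (((j : ℤ) - k) * N : ℤ) := by
        push_cast; ring
      rw [e]
      rw [← Int.cast_abs, abs_mul, abs_of_nonneg (by positivity : (0:ℤ) ≤ (N:ℤ))]
      have : (N : ℤ) ≤ |(j : ℤ) - k| * N := le_mul_of_one_le_left (by positivity) h1
      exact_mod_cast this
    nlinarith [abs_nonneg (((j * N : ℕ) : ℝ) - ((k * N : ℕ) : ℝ))]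
  have hdisj1 : ∀ K : ℕ, Set.PairwiseDisjoint (↑(Finset.range K))
      (fun j : ℕ => Metric.closedBall (((j * N : ℕ) : ℝ) • v) 1) := by
    intro K j _ k _ hjk
    exact Metric.closedBall_disjoint_closedBall (by linarith [hdist j k hjk])
  have hdisj2 : ∀ K : ℕ, Set.PairwiseDisjoint (↑(Finset.range K))
      (fun j : ℕ => Metric.closedBall (-(((j * N : ℕ) : ℝ) • v)) 1) := by
    intro K j _ k _ hjk
    refine Metric.closedBall_disjoint_closedBall ?_
    rw [dist_neg_neg]
    linarith [hdist j k hjk]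
  -- sum bound
  have hsum1 : ∀ K : ℕ, ∑ j ∈ Finset.range K,
      (∫⁻ y in Metric.closedBall (((j * N : ℕ) : ℝ) • v) 1, g y) ≤ I := by
    intro K
    rw [← lintegral_biUnion_finset (hdisj1 K) (fun b _ => measurableSet_closedBall) g]
    exact setLIntegral_le_lintegral _ _
  have hsum2 : ∀ K : ℕ, ∑ j ∈ Finset.range K,
      (∫⁻ y in Metric.closedBall (-(((j * N : ℕ) : ℝ) • v)) 1, g y) ≤ I := by
    intro K
    rw [← lintegral_biUnion_finset (hdisj2 K) (fun b _ => measurableSet_closedBall) g]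
    exact setLIntegral_le_lintegral _ _
  have hKc : ∀ K : ℕ, (K : ℝ≥0∞) * c ≤ I + I := by
    intro K
    calc (K : ℝ≥0∞) * c = ∑ _j ∈ Finset.range K, c := by
          simp [Finset.sum_const, nsmul_eq_mul]
      _ ≤ ∑ j ∈ Finset.range K,
          ((∫⁻ y in Metric.closedBall (((j * N : ℕ) : ℝ) • v) 1, g y)
            + ∫⁻ y in Metric.closedBall (-(((j * N : ℕ) : ℝ) • v)) 1, g y) := by
          refine Finset.sum_le_sum fun j _ => ?_
          calc c ≤ _ := hlow (j * N)
            _ = _ := hsplit (j * N)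
      _ = (∑ j ∈ Finset.range K,
            ∫⁻ y in Metric.closedBall (((j * N : ℕ) : ℝ) • v) 1, g y)
          + ∑ j ∈ Finset.range K,
            ∫⁻ y in Metric.closedBall (-(((j * N : ℕ) : ℝ) • v)) 1, g y :=
          Finset.sum_add_distrib
      _ ≤ I + I := add_le_add (hsum1 K) (hsum2 K)
  -- contradiction
  have hII : I + I ≠ ⊤ := ENNReal.add_ne_top.mpr ⟨hI, hI⟩
  obtain ⟨K, hK⟩ := ENNReal.exists_nat_gt (ENNReal.div_lt_top hII hc0).ne
  have h2 : I + I < (K : ℝ≥0∞) * c := by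
    rwa [ENNReal.div_lt_iff (Or.inl hc0) (Or.inl hcT)] at hK
  exact absurd (hKc K) (not_le.mpr h2)
end

section
/- Let b : ℝ^d → ℝ^d be continuous and eventually strictly monotone: there exist R > 0 and λ₁ > 0 such that (b(x) - b(y), x - y) ≤ -λ₁|x-y|² whenever |x| > R and |y| > R. Then there exist constants c > 0 and C > 0 such that (b(x), x) ≤ -c|x|² + C for all x ∈ ℝ^d. -/
theorem stmt2 {d : ℕ} (b : EuclideanSpace ℝ (Fin d) → EuclideanSpace ℝ (Fin d))
    (hb : Continuous b) (R lam₁ : ℝ) (hR : 0 < R) (hlam : 0 < lam₁)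
    (hmon : ∀ x y : EuclideanSpace ℝ (Fin d), R < ‖x‖ → R < ‖y‖ →
      (inner ℝ (b x - b y) (x - y) : ℝ) ≤ -lam₁ * ‖x - y‖ ^ 2) :
    ∃ c > (0 : ℝ), ∃ C > (0 : ℝ), ∀ x : EuclideanSpace ℝ (Fin d),
      (inner ℝ (b x) x : ℝ) ≤ -c * ‖x‖ ^ 2 + C := by
  -- sup of ‖b‖ on closed ball of radius 4R
  obtain ⟨z, hz, hzmax⟩ :=
    (isCompact_closedBall (0 : EuclideanSpace ℝ (Fin d)) (4*R)).exists_isMaxOn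
      ⟨0, Metric.mem_closedBall_self (by linarith)⟩ (hb.norm.continuousOn)
  obtain ⟨M, hM⟩ : ∃ M : ℝ, M = ‖b z‖ := ⟨_, rfl⟩
  have hM0 : 0 ≤ M := hM ▸ norm_nonneg _
  have hmax : ∀ w : EuclideanSpace ℝ (Fin d), ‖w‖ ≤ 4*R → ‖b w‖ ≤ M := by
    intro w hw
    have := hzmax (by simpa [Metric.mem_closedBall, dist_zero_right] using hw)
    simpa [hM] using this
  refine ⟨lam₁/4, by linarith, M^2/lam₁ + 4*R*M + 4*lam₁*R^2 + 1, by positivity,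
    fun x => ?_⟩
  obtain ⟨n, hn⟩ : ∃ n : ℝ, n = ‖x‖ := ⟨_, rfl⟩
  rw [← hn]
  rcases le_or_gt n (4*R) with hx | hx
  · have h1 : (inner ℝ (b x) x : ℝ) ≤ ‖b x‖ * ‖x‖ := real_inner_le_norm _ _
    have h2 : ‖b x‖ ≤ M := hmax x (by rw [← hn]; exact hx)
    have hn0 : 0 ≤ n := hn ▸ norm_nonneg _
    have h3 : ‖b x‖ * ‖x‖ ≤ M * (4*R) := by
      rw [← hn]; exact mul_le_mul h2 hx hn0 hM0
    have h4 : (lam₁/4) * n^2 ≤ 4*lam₁*R^2 := by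
      have hsq : n^2 ≤ 16*R^2 := by nlinarith
      nlinarith
    have h5 : 0 ≤ M^2/lam₁ := by positivity
    have h6 : 0 ≤ 4*R*M := by positivity
    linarith
  · have hn0 : 0 < n := by linarith
    set y : EuclideanSpace ℝ (Fin d) := (2*R/n) • x with hy
    have hs0 : 0 < 2*R/n := by positivity
    have hyn : ‖y‖ = 2*R := by
      rw [hy, norm_smul, Real.norm_eq_abs, abs_of_pos hs0, ← hn]
      field_simp
    have hmon' := hmon x y (by rw [← hn]; linarith) (by rw [hyn]; linarith)
    obtain ⟨t, ht⟩ : ∃ t : ℝ, t = 1 - 2*R/n := ⟨_, rfl⟩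
    have hs1 : 2*R/n < 1/2 := by rw [div_lt_iff₀ hn0]; linarith
    have ht0 : (1:ℝ)/2 < t := by rw [ht]; linarith
    have htpos : (0:ℝ) < t := by linarith
    have htn : t * n = n - 2*R := by
      rw [ht]; field_simp
    have hxy : x - y = t • x := by
      rw [hy, ht, hn, sub_smul, one_smul]
    have hnormxy : ‖x - y‖ = t * n := by
      rw [hxy, norm_smul, Real.norm_eq_abs, abs_of_pos htpos, hn]
    have hinner : (inner ℝ (b x - b y) (x - y) : ℝ)
        = t * ((inner ℝ (b x) x : ℝ) - (inner ℝ (b y) x : ℝ)) := by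
      rw [hxy, real_inner_smul_right, inner_sub_left]
    rw [hinner, hnormxy] at hmon'
    have hrw : -lam₁ * (t*n)^2 = t * (-lam₁ * t * n^2) := by ring
    rw [hrw] at hmon'
    have key : (inner ℝ (b x) x : ℝ) - (inner ℝ (b y) x : ℝ) ≤ -lam₁ * t * n^2 :=
      (mul_le_mul_iff_right₀ htpos).mp hmon'
    have hBy : (inner ℝ (b y) x : ℝ) ≤ M * n := by
      have h1 : (inner ℝ (b y) x : ℝ) ≤ ‖b y‖ * ‖x‖ := real_inner_le_norm _ _
      have h2 : ‖b y‖ ≤ M := hmax y (by rw [hyn]; linarith)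
      calc (inner ℝ (b y) x : ℝ) ≤ ‖b y‖ * ‖x‖ := h1
        _ ≤ M * n := by rw [← hn]; exact mul_le_mul h2 le_rfl hn0.le hM0
    have htn2 : lam₁/2 * n^2 ≤ lam₁ * t * n^2 := by
      have h := mul_nonneg (by linarith : (0:ℝ) ≤ t - 1/2)
        (by positivity : (0:ℝ) ≤ lam₁ * n^2)
      nlinarith
    have h6 : M*n - lam₁/4*n^2 ≤ M^2/lam₁ := by
      rw [le_div_iff₀ hlam]
      nlinarith [sq_nonneg (lam₁/2*n - M)]
    have h7 : 0 ≤ 4*R*M := by positivity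
    have h8 : 0 ≤ 4*lam₁*R^2 := by positivity
    linarith
end

section
/- Let g : [0,∞) → ℝ be C² and convex, d ≥ 2, and suppose x ↦ e^{-g(|x|²)} is integrable on ℝ^d. Then ∫_{ℝ^d} g'(|x|²) e^{-g(|x|²)} dx > 0. -/
open MeasureTheory Real Set Filter Topology

theorem stmt8 {d : ℕ} (hd : 2 ≤ d) (g : ℝ → ℝ) (hg : ContDiff ℝ 2 g)
    (hconv : ConvexOn ℝ (Set.Ici (0 : ℝ)) g)
    (hint : Integrable (fun x : EuclideanSpace ℝ (Fin d) => Real.exp (-g (‖x‖ ^ 2)))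
      (volume : Measure (EuclideanSpace ℝ (Fin d)))) :
    0 < ∫ x : EuclideanSpace ℝ (Fin d), deriv g (‖x‖ ^ 2) * Real.exp (-g (‖x‖ ^ 2)) := by
  obtain ⟨m, rfl⟩ : ∃ m, d = m + 2 := ⟨d - 2, by omega⟩
  haveI : Nonempty (Fin (m + 2)) := ⟨⟨0, by omega⟩⟩
  haveI : Nontrivial (EuclideanSpace ℝ (Fin (m + 2))) := inferInstance
  have hgd : Differentiable ℝ g := hg.differentiable (by norm_num)
  have hg'c : Continuous (deriv g) := hg.continuous_deriv (by norm_num)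
  have hφc : Continuous fun r : ℝ => Real.exp (-g (r ^ 2)) :=
    Real.continuous_exp.comp ((hgd.continuous.comp (continuous_pow 2)).neg)
  -- Step 1: existence of a point with positive derivative
  have key : ∃ t₀, 0 ≤ t₀ ∧ 0 < deriv g t₀ := by
    by_contra hcon
    push_neg at hcon
    have hanti : AntitoneOn g (Ici (0 : ℝ)) := by
      apply antitoneOn_of_deriv_nonpos (convex_Ici 0) hgd.continuous.continuousOn
        (fun x _ => (hgd x).differentiableWithinAt)
      intro x hx
      rw [interior_Ici] at hx
      exact hcon x hx.le
    have hbound : ∀ x : EuclideanSpace ℝ (Fin (m + 2)),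
        Real.exp (-g 0) ≤ Real.exp (-g (‖x‖ ^ 2)) := by
      intro x
      apply Real.exp_le_exp.2
      apply neg_le_neg
      exact hanti (mem_Ici.2 le_rfl) (mem_Ici.2 (by positivity)) (by positivity)
    have hconst : Integrable (fun _ : EuclideanSpace ℝ (Fin (m + 2)) => Real.exp (-g 0))
        volume := by
      apply hint.mono' aestronglyMeasurable_const
      filter_upwards with x
      rw [Real.norm_eq_abs, abs_of_pos (Real.exp_pos _)]
      exact hbound x
    rcases integrable_const_iff.1 hconst with h | h
    · exact absurd h (ne_of_gt (Real.exp_pos _))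
    · rw [isFiniteMeasure_iff, MeasureTheory.measure_univ_of_isAddLeftInvariant
        (volume : Measure (EuclideanSpace ℝ (Fin (m + 2))))] at h
      exact lt_irrefl _ h
  obtain ⟨t₀, ht₀, hc⟩ := key
  set c := deriv g t₀ with hcdef
  -- Step 2: linear lower bound and derivative lower bound
  have hlb : ∀ t, t₀ ≤ t → g t₀ + c * (t - t₀) ≤ g t := by
    intro t ht
    rcases eq_or_lt_of_le ht with rfl | h
    · simp
    · have h1 := hconv.deriv_le_slope (mem_Ici.2 ht₀) (mem_Ici.2 (ht₀.trans ht)) h (hgd t₀)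
      rw [slope_def_field] at h1
      have h2 : 0 < t - t₀ := by linarith
      have h3 := (le_div_iff₀ h2).1 h1
      linarith
  have hge : ∀ t, t₀ ≤ t → c ≤ deriv g t := by
    intro t ht
    rcases eq_or_lt_of_le ht with rfl | h
    · exact le_rfl
    · have h1 := hconv.slope_le_deriv (mem_Ici.2 ht₀) (mem_Ici.2 (ht₀.trans ht)) h (hgd t)
      have h2 := hconv.deriv_le_slope (mem_Ici.2 ht₀) (mem_Ici.2 (ht₀.trans ht)) h (hgd t₀)
      exact h2.trans h1
  -- Step 3: exponential bound
  set s₀ : ℝ := Real.sqrt t₀ + 1 with hs₀def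
  have hs₀1 : 1 ≤ s₀ := by rw [hs₀def]; have := Real.sqrt_nonneg t₀; linarith
  have hs₀0 : 0 < s₀ := by linarith
  have hsq : ∀ r : ℝ, s₀ ≤ r → t₀ ≤ r ^ 2 := by
    intro r hr
    rw [hs₀def] at hr
    have h1 : Real.sqrt t₀ ≤ r := by linarith
    nlinarith [Real.sq_sqrt ht₀, Real.sqrt_nonneg t₀]
  set K : ℝ := Real.exp (c * t₀ - g t₀) with hKdef
  have hexp_le : ∀ r : ℝ, s₀ ≤ r → Real.exp (-g (r ^ 2)) ≤ K * Real.exp (-c * r ^ 2) := by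
    intro r hr
    rw [hKdef, ← Real.exp_add]
    apply Real.exp_le_exp.2
    have := hlb (r ^ 2) (hsq r hr)
    linarith
  -- Step 4: integrability of r^n * exp(-g(r^2)) on (0, ∞)
  have hIn : ∀ n : ℕ, IntegrableOn (fun r => r ^ n * Real.exp (-g (r ^ 2))) (Ioi (0 : ℝ)) := by
    intro n
    have hcont : Continuous fun r : ℝ => r ^ n * Real.exp (-g (r ^ 2)) :=
      (continuous_pow n).mul hφc
    have h1 : IntegrableOn (fun r => r ^ n * Real.exp (-g (r ^ 2))) (Ioc (0 : ℝ) s₀) volume :=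
      hcont.integrableOn_Ioc
    have h2 : IntegrableOn (fun r => r ^ n * Real.exp (-g (r ^ 2))) (Ioi s₀) volume := by
      have hs : (-1 : ℝ) < (n : ℝ) := by
        have : (0:ℝ) ≤ (n:ℝ) := Nat.cast_nonneg n
        linarith
      apply Integrable.mono'
        (((integrable_rpow_mul_exp_neg_mul_sq hc hs).const_mul K).integrableOn)
      · exact hcont.aestronglyMeasurable
      · filter_upwards [ae_restrict_mem measurableSet_Ioi] with r hr
        have hr0 : (0 : ℝ) < r := hs₀0.trans hr
        have h3 : Real.exp (-g (r ^ 2)) ≤ K * Real.exp (-c * r ^ 2) := hexp_le r (le_of_lt hr)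
        rw [Real.norm_eq_abs, abs_mul, abs_of_nonneg (by positivity : (0:ℝ) ≤ r ^ n),
          abs_of_pos (Real.exp_pos _)]
        calc r ^ n * Real.exp (-g (r ^ 2)) ≤ r ^ n * (K * Real.exp (-c * r ^ 2)) :=
              mul_le_mul_of_nonneg_left h3 (by positivity)
          _ = K * (r ^ ((n : ℝ)) * Real.exp (-c * r ^ 2)) := by
              rw [← Real.rpow_natCast r n]; ring
    have hsplit : Ioi (0 : ℝ) = Ioc 0 s₀ ∪ Ioi s₀ := (Ioc_union_Ioi_eq_Ioi hs₀0.le).symm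
    rw [hsplit, integrableOn_union]
    exact ⟨h1, h2⟩
  -- notation
  set A : ℝ → ℝ := fun r => r ^ (m + 1) * (deriv g (r ^ 2) * Real.exp (-g (r ^ 2))) with hAdef
  set B : ℝ → ℝ := fun r => (m : ℝ) / 2 * (r ^ (m - 1) * Real.exp (-g (r ^ 2))) with hBdef
  set Φ : ℝ → ℝ := fun r => -(1 / 2 : ℝ) * (r ^ m * Real.exp (-g (r ^ 2))) with hΦdef
  have hAc : Continuous A := (continuous_pow _).mul (hg'c.comp (continuous_pow 2) |>.mul hφc)
  have hBc : Continuous B := continuous_const.mul ((continuous_pow _).mul hφc)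
  have hΦc : Continuous Φ := continuous_const.mul ((continuous_pow _).mul hφc)
  -- derivative of exp(-g(r^2))
  have hφ' : ∀ r : ℝ, HasDerivAt (fun s : ℝ => Real.exp (-g (s ^ 2)))
      (-(2 * r * deriv g (r ^ 2)) * Real.exp (-g (r ^ 2))) r := by
    intro r
    have h1 : HasDerivAt (fun s : ℝ => g (s ^ 2)) (deriv g (r ^ 2) * (2 * r)) r := by
      have h2 := ((hgd (r ^ 2)).hasDerivAt).comp r (hasDerivAt_pow 2 r)
      simp only [Function.comp_def] at h2
      refine h2.congr_deriv ?_
      push_cast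
      ring
    have h3 := (h1.neg).exp
    refine h3.congr_deriv ?_
    show Real.exp (-g (r ^ 2)) * _ = _
    ring
  have hΦ' : ∀ r : ℝ, HasDerivAt Φ (A r - B r) r := by
    intro r
    have h1 := ((hasDerivAt_pow m r).mul (hφ' r)).const_mul (-(1 / 2 : ℝ))
    rw [hΦdef]
    refine h1.congr_deriv ?_
    simp only [hAdef, hBdef]
    ring
  -- A is nonnegative for r ≥ s₀
  have hA_nonneg : ∀ r : ℝ, s₀ ≤ r → 0 ≤ A r := by
    intro r hr
    have hr0 : (0 : ℝ) < r := hs₀0.trans_le hr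
    have h1 : (0:ℝ) < deriv g (r ^ 2) := lt_of_lt_of_le hc (hge _ (hsq r hr))
    have := Real.exp_pos (-g (r ^ 2))
    rw [hAdef]
    positivity
  -- M and its bounds
  set M : ℝ := ∫ r in Ioi (0 : ℝ), r ^ (m - 1) * Real.exp (-g (r ^ 2)) with hMdef
  have hM_nonneg : 0 ≤ M :=
    setIntegral_nonneg measurableSet_Ioi (fun r hr => by
      have hr0 : (0:ℝ) < r := hr
      positivity)
  have hIoc_le : ∀ T : ℝ, ∫ r in Ioc s₀ T, r ^ (m - 1) * Real.exp (-g (r ^ 2)) ≤ M := by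
    intro T
    apply setIntegral_mono_set (hIn (m - 1))
    · filter_upwards [ae_restrict_mem measurableSet_Ioi] with r hr
      have hr0 : (0:ℝ) < r := hr
      positivity
    · apply HasSubset.Subset.eventuallyLE
      intro r hr
      exact hs₀0.trans hr.1
  -- FTC on finite intervals
  have hFTC : ∀ T : ℝ, s₀ ≤ T → ∫ r in s₀..T, A r =
      (Φ T - Φ s₀) + (m : ℝ) / 2 * ∫ r in s₀..T, r ^ (m - 1) * Real.exp (-g (r ^ 2)) := by
    intro T hT
    have h1 : ∫ r in s₀..T, (A r - B r) = Φ T - Φ s₀ :=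
      intervalIntegral.integral_eq_sub_of_hasDerivAt (fun r _ => hΦ' r)
        ((hAc.sub hBc).intervalIntegrable _ _)
    rw [intervalIntegral.integral_sub (hAc.intervalIntegrable _ _)
      (hBc.intervalIntegrable _ _)] at h1
    have h3 : ∫ r in s₀..T, B r =
        (m : ℝ) / 2 * ∫ r in s₀..T, r ^ (m - 1) * Real.exp (-g (r ^ 2)) := by
      rw [← intervalIntegral.integral_const_mul]
    linarith
  have hΦ_nonpos : ∀ T : ℝ, 0 ≤ T → Φ T ≤ 0 := by
    intro T hT
    rw [hΦdef]
    have := Real.exp_pos (-g (T ^ 2))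
    nlinarith [pow_nonneg hT m, mul_nonneg (pow_nonneg hT m) this.le]
  -- integrability of A
  have hIA : IntegrableOn A (Ioi (0 : ℝ)) := by
    have h2 : IntegrableOn A (Ioi s₀) := by
      apply integrableOn_Ioi_of_intervalIntegral_norm_bounded (-Φ s₀ + (m : ℝ) / 2 * M) s₀
        (fun T : ℝ => hAc.integrableOn_Ioc) tendsto_id
      filter_upwards [eventually_ge_atTop s₀] with T hT
      simp only [id_eq]
      have hnorm : ∫ r in s₀..T, ‖A r‖ = ∫ r in s₀..T, A r := by
        apply intervalIntegral.integral_congr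
        intro r hr
        rw [uIcc_of_le hT] at hr
        exact Real.norm_of_nonneg (hA_nonneg r hr.1)
      rw [hnorm, hFTC T hT]
      have h4 : ∫ r in s₀..T, r ^ (m - 1) * Real.exp (-g (r ^ 2)) ≤ M := by
        rw [intervalIntegral.integral_of_le hT]
        exact hIoc_le T
      have h5 := mul_le_mul_of_nonneg_left h4 (by positivity : (0:ℝ) ≤ (m : ℝ) / 2)
      have h6 := hΦ_nonpos T (hs₀0.le.trans hT)
      linarith
    have h1 : IntegrableOn A (Ioc (0 : ℝ) s₀) := hAc.integrableOn_Ioc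
    rw [show Ioi (0 : ℝ) = Ioc 0 s₀ ∪ Ioi s₀ from (Ioc_union_Ioi_eq_Ioi hs₀0.le).symm,
      integrableOn_union]
    exact ⟨h1, h2⟩
  have hIB : IntegrableOn B (Ioi (0 : ℝ)) := by
    rw [hBdef]
    exact (hIn (m - 1)).const_mul _
  -- limit of Φ at infinity
  have hlim0 : Tendsto (fun T : ℝ => T ^ m * Real.exp (-g (T ^ 2))) atTop (𝓝 0) := by
    have h0 : Tendsto (fun T : ℝ => T ^ ((m : ℝ)) * Real.exp (-c * T ^ 2)) atTop (𝓝 0) :=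
      ((rpow_mul_exp_neg_mul_sq_isLittleO_exp_neg hc (m : ℝ)).isBigO).trans_tendsto
        (Real.tendsto_exp_comp_nhds_zero.2
          (Tendsto.const_mul_atTop_of_neg (by norm_num : -(1/2:ℝ) < 0) tendsto_id))
    have h1 : Tendsto (fun T : ℝ => K * (T ^ ((m : ℝ)) * Real.exp (-c * T ^ 2))) atTop (𝓝 0) := by
      simpa using h0.const_mul K
    apply squeeze_zero' ?_ ?_ h1
    · filter_upwards [eventually_ge_atTop (0:ℝ)] with T hT
      positivity
    · filter_upwards [eventually_ge_atTop s₀] with T hT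
      have hT0 : (0:ℝ) < T := hs₀0.trans_le hT
      calc T ^ m * Real.exp (-g (T ^ 2)) ≤ T ^ m * (K * Real.exp (-c * T ^ 2)) :=
            mul_le_mul_of_nonneg_left (hexp_le T hT) (by positivity)
        _ = K * (T ^ ((m : ℝ)) * Real.exp (-c * T ^ 2)) := by
            rw [← Real.rpow_natCast T m]; ring
  have hΦlim : Tendsto Φ atTop (𝓝 0) := by
    rw [hΦdef]
    have := hlim0.const_mul (-(1 / 2 : ℝ))
    simpa using this
  -- main FTC on (0, ∞)
  have hmain : ∫ r in Ioi (0 : ℝ), (A r - B r) = 0 - Φ 0 :=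
    integral_Ioi_of_hasDerivAt_of_tendsto' (fun r _ => hΦ' r) (hIA.sub hIB) hΦlim
  rw [integral_sub hIA hIB] at hmain
  have hBint : ∫ r in Ioi (0 : ℝ), B r = (m : ℝ) / 2 * M := by
    rw [hBdef, hMdef, integral_const_mul]
  have hΦ0 : Φ 0 = -(1 / 2 : ℝ) * ((0:ℝ) ^ m * Real.exp (-g 0)) := by
    rw [hΦdef]; norm_num
  have hval : ∫ r in Ioi (0 : ℝ), A r =
      (1 / 2 : ℝ) * ((0:ℝ) ^ m * Real.exp (-g 0)) + (m : ℝ) / 2 * M := by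
    rw [hBint, hΦ0] at hmain
    linarith
  -- positivity of the 1D integral
  have hApos : 0 < ∫ r in Ioi (0 : ℝ), A r := by
    rcases Nat.eq_zero_or_pos m with rfl | hm0
    · rw [hval]
      norm_num [Real.exp_pos]
    · have hMpos : 0 < M := by
        rw [hMdef]
        rw [setIntegral_pos_iff_support_of_nonneg_ae]
        · apply lt_of_lt_of_le _ (measure_mono (show Ioi (0:ℝ) ⊆
            Function.support (fun r => r ^ (m - 1) * Real.exp (-g (r ^ 2))) ∩ Ioi 0 from ?_))
          · rw [Real.volume_Ioi]
            exact ENNReal.zero_lt_top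
          · intro r hr
            refine ⟨?_, hr⟩
            have hr0 : (0:ℝ) < r := hr
            have := Real.exp_pos (-g (r ^ 2))
            simp only [Function.mem_support]
            positivity
        · filter_upwards [ae_restrict_mem measurableSet_Ioi] with r hr
          have hr0 : (0:ℝ) < r := hr
          positivity
        · exact hIn (m - 1)
      rw [hval]
      have h7 : (0:ℝ) ^ m = 0 := zero_pow (by omega)
      rw [h7]
      have : (0:ℝ) < (m : ℝ) / 2 := by positivity
      nlinarith
  -- polar coordinates
  have hpolar := integral_fun_norm_addHaar (volume : Measure (EuclideanSpace ℝ (Fin (m + 2))))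
    (fun r => deriv g (r ^ 2) * Real.exp (-g (r ^ 2)))
  rw [finrank_euclideanSpace_fin] at hpolar
  have hball : (0:ℝ) < (volume (Metric.ball (0 : EuclideanSpace ℝ (Fin (m + 2))) 1)).toReal := by
    rw [ENNReal.toReal_pos_iff]
    exact ⟨Metric.measure_ball_pos _ _ one_pos, measure_ball_lt_top⟩
  calc (0:ℝ) < (m + 2 : ℕ) •
        (volume (Metric.ball (0 : EuclideanSpace ℝ (Fin (m + 2))) 1)).toReal •
        ∫ r in Ioi (0:ℝ), r ^ (m + 2 - 1) • (deriv g (r ^ 2) * Real.exp (-g (r ^ 2))) := by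
        have h8 : ∫ r in Ioi (0:ℝ), r ^ (m + 2 - 1) • (deriv g (r ^ 2) * Real.exp (-g (r ^ 2)))
            = ∫ r in Ioi (0:ℝ), A r := by
          apply setIntegral_congr_fun measurableSet_Ioi
          intro r hr
          simp [hAdef, smul_eq_mul]
        rw [h8]
        simp only [nsmul_eq_mul, smul_eq_mul]
        positivity
    _ = ∫ x : EuclideanSpace ℝ (Fin (m + 2)), deriv g (‖x‖ ^ 2) * Real.exp (-g (‖x‖ ^ 2)) :=
        hpolar.symm
end

section
/- Let V : ℝ^d → ℝ be continuous, V ≥ 0, with V(x) ≥ C₀ log|x| for |x| ≥ R₀ where C₀ > 1, R₀ > 1, and suppose ‖D²V(x)‖ ≤ C₀|x|^N for |x| ≥ R₀. Let Z_σ := ∫ e^{-(2/σ²)V} dx and assume Z_σ ≥ Cσ^d for σ ∈ (0,1]. Then for every R ≥ R₀, lim_{σ→0} (1/Z_σ) ∫_{B(0,R)^c} (1 + ‖D²V(x)‖) e^{-(2/σ²)V(x)} dx = 0. -/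
open MeasureTheory Filter

theorem stmt10 {d : ℕ} (V : EuclideanSpace ℝ (Fin d) → ℝ) (hV : ContDiff ℝ 2 V)
    (hVpos : ∀ x, 0 ≤ V x) (C₀ R₀ : ℝ) (hC₀ : 1 < C₀) (hR₀ : 1 < R₀) (N : ℕ)
    (hVlog : ∀ x : EuclideanSpace ℝ (Fin d), R₀ ≤ ‖x‖ → C₀ * Real.log ‖x‖ ≤ V x)
    (hD2 : ∀ x : EuclideanSpace ℝ (Fin d), R₀ ≤ ‖x‖ →
      ‖iteratedFDeriv ℝ 2 V x‖ ≤ C₀ * ‖x‖ ^ N)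
    (Z : ℝ → ℝ)
    (hZ : ∀ σ : ℝ, Z σ = ∫ x : EuclideanSpace ℝ (Fin d), Real.exp (-(2 / σ ^ 2) * V x))
    (C : ℝ) (hC : 0 < C)
    (hZlow : ∀ σ ∈ Set.Ioc (0 : ℝ) 1, C * σ ^ d ≤ Z σ) :
    ∀ R : ℝ, R₀ ≤ R →
      Tendsto (fun σ : ℝ =>
          (1 / Z σ) * ∫ x in (Metric.ball (0 : EuclideanSpace ℝ (Fin d)) R)ᶜ,
            (1 + ‖iteratedFDeriv ℝ 2 V x‖) * Real.exp (-(2 / σ ^ 2) * V x))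
        (nhdsWithin 0 (Set.Ioi 0)) (nhds 0) := by
  intro R hR
  have hR1 : (1 : ℝ) < R := lt_of_lt_of_le hR₀ hR
  have hRpos : (0 : ℝ) < R := lt_trans one_pos hR1
  -- the integrable dominating base function
  have hdim : ((Module.finrank ℝ (EuclideanSpace ℝ (Fin d))) : ℝ) = d := by
    rw [finrank_euclideanSpace_fin]
  have hbase : Integrable (fun x : EuclideanSpace ℝ (Fin d) =>
      (1 + ‖x‖) ^ (-((d : ℝ) + 1))) := by
    apply integrable_one_add_norm
    rw [hdim]; linarith
  set J : ℝ := ∫ x : EuclideanSpace ℝ (Fin d), (1 + ‖x‖) ^ (-((d : ℝ) + 1)) with hJdef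
  have hJ0 : 0 ≤ J := integral_nonneg fun x => Real.rpow_nonneg (by positivity) _
  set M : ℝ := (N : ℝ) + d + 1 with hMdef
  have hM0 : (0 : ℝ) < M := by positivity
  set c : ℝ := 2 * C₀ * Real.log R with hcdef
  have hlogR : 0 < Real.log R := Real.log_pos hR1
  have hc0 : 0 < c := by positivity
  set K : ℝ := (1 + C₀) * (2 : ℝ) ^ ((d : ℝ) + 1) * R ^ M * J / C with hKdef
  -- the dominating function of σ
  have hg : Tendsto (fun σ : ℝ => K * (((σ ^ 2)⁻¹) ^ ((d : ℝ) / 2)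
      * Real.exp (-c * (σ ^ 2)⁻¹))) (nhdsWithin 0 (Set.Ioi 0)) (nhds 0) := by
    have h1 : Tendsto (fun σ : ℝ => (σ ^ 2)⁻¹) (nhdsWithin 0 (Set.Ioi 0)) atTop := by
      apply tendsto_inv_nhdsGT_zero.comp
      apply tendsto_nhdsWithin_of_tendsto_nhds_of_eventually_within
      · have h0 : Tendsto (fun σ : ℝ => σ ^ 2) (nhdsWithin (0:ℝ) (Set.Ioi 0)) (nhds ((0:ℝ) ^ 2)) :=
          ((continuous_pow 2).tendsto (0:ℝ)).mono_left
            (nhdsWithin_le_nhds (s := Set.Ioi (0:ℝ)))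
        simpa using h0
      · filter_upwards [self_mem_nhdsWithin] with σ hσ
        exact pow_pos (show (0:ℝ) < σ from hσ) 2
    have h2 := (tendsto_rpow_mul_exp_neg_mul_atTop_nhds_zero ((d : ℝ) / 2) c hc0).comp h1
    have := h2.const_mul K
    simpa using this
  -- squeeze
  have hσ₀pos : (0 : ℝ) < min 1 (Real.sqrt (2 * C₀ / M)) := by
    apply lt_min one_pos
    apply Real.sqrt_pos.mpr
    positivity
  apply tendsto_of_tendsto_of_tendsto_of_le_of_le' tendsto_const_nhds hg
  · -- nonnegativity
    filter_upwards [self_mem_nhdsWithin,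
      Ioo_mem_nhdsGT hσ₀pos] with σ hσ hσ'
    have hσpos : 0 < σ := hσ
    have hσ1 : σ ≤ 1 := le_of_lt (lt_of_lt_of_le hσ'.2 (min_le_left _ _))
    have hZpos : 0 < Z σ := lt_of_lt_of_le (by positivity) (hZlow σ ⟨hσpos, hσ1⟩)
    have hI0 : 0 ≤ ∫ x in (Metric.ball (0 : EuclideanSpace ℝ (Fin d)) R)ᶜ,
        (1 + ‖iteratedFDeriv ℝ 2 V x‖) * Real.exp (-(2 / σ ^ 2) * V x) :=
      integral_nonneg fun x => by positivity
    positivity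
  · -- upper bound
    filter_upwards [self_mem_nhdsWithin,
      Ioo_mem_nhdsGT hσ₀pos] with σ hσ hσ'
    have hσpos : 0 < σ := hσ
    have hσ1 : σ ≤ 1 := le_of_lt (lt_of_lt_of_le hσ'.2 (min_le_left _ _))
    have hσsq : σ ^ 2 < 2 * C₀ / M := by
      have h := lt_of_lt_of_le hσ'.2 (min_le_right _ _)
      exact (Real.lt_sqrt hσpos.le).mp h
    have hσ2pos : (0:ℝ) < σ ^ 2 := by positivity
    have hMe : M ≤ 2 * C₀ / σ ^ 2 := by
      rw [le_div_iff₀ hσ2pos]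
      rw [lt_div_iff₀ hM0] at hσsq
      nlinarith
    have hZpos : 0 < Z σ := lt_of_lt_of_le (by positivity) (hZlow σ ⟨hσpos, hσ1⟩)
    set e : ℝ := -(2 * C₀ / σ ^ 2) with hedef
    have hMe0 : M + e ≤ 0 := by simp only [hedef]; linarith
    set A : ℝ := (1 + C₀) * (2 : ℝ) ^ ((d : ℝ) + 1) * R ^ (M + e) with hAdef
    have hA0 : 0 ≤ A := by positivity
    -- pointwise bound on the complement of the ball
    have hpt : ∀ x ∈ (Metric.ball (0 : EuclideanSpace ℝ (Fin d)) R)ᶜ,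
        (1 + ‖iteratedFDeriv ℝ 2 V x‖) * Real.exp (-(2 / σ ^ 2) * V x)
          ≤ A * (1 + ‖x‖) ^ (-((d : ℝ) + 1)) := by
      intro x hx
      have hxR : R ≤ ‖x‖ := by
        simp only [Set.mem_compl_iff, Metric.mem_ball, dist_zero_right, not_lt] at hx
        exact hx
      have hxR₀ : R₀ ≤ ‖x‖ := le_trans hR hxR
      have hx1 : (1 : ℝ) ≤ ‖x‖ := le_trans hR1.le hxR
      have hxpos : (0 : ℝ) < ‖x‖ := lt_of_lt_of_le one_pos hx1
      -- exponential bound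
      have hexp : Real.exp (-(2 / σ ^ 2) * V x) ≤ ‖x‖ ^ e := by
        rw [Real.rpow_def_of_pos hxpos]
        apply Real.exp_le_exp.mpr
        have h1 : C₀ * Real.log ‖x‖ ≤ V x := hVlog x hxR₀
        have h2 : (0 : ℝ) < 2 / σ ^ 2 := by positivity
        have : (2 / σ ^ 2) * (C₀ * Real.log ‖x‖) ≤ (2 / σ ^ 2) * V x :=
          mul_le_mul_of_nonneg_left h1 h2.le
        have heq : Real.log ‖x‖ * e = -((2 / σ ^ 2) * (C₀ * Real.log ‖x‖)) := by
          simp only [hedef]; ring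
        rw [heq]
        linarith
      -- first factor bound
      have hfac : 1 + ‖iteratedFDeriv ℝ 2 V x‖ ≤ (1 + C₀) * ‖x‖ ^ (N : ℝ) := by
        have h1 : ‖iteratedFDeriv ℝ 2 V x‖ ≤ C₀ * ‖x‖ ^ N := hD2 x hxR₀
        have h2 : (1 : ℝ) ≤ ‖x‖ ^ N := one_le_pow₀ hx1
        rw [Real.rpow_natCast]
        nlinarith [h1, h2]
      have hexp0 : (0 : ℝ) ≤ Real.exp (-(2 / σ ^ 2) * V x) := (Real.exp_pos _).le
      have hfac0 : (0 : ℝ) ≤ 1 + ‖iteratedFDeriv ℝ 2 V x‖ := by positivity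
      calc (1 + ‖iteratedFDeriv ℝ 2 V x‖) * Real.exp (-(2 / σ ^ 2) * V x)
          ≤ ((1 + C₀) * ‖x‖ ^ (N : ℝ)) * ‖x‖ ^ e := by
            apply mul_le_mul hfac hexp hexp0 (by positivity)
        _ = (1 + C₀) * (‖x‖ ^ (-((d : ℝ) + 1)) * ‖x‖ ^ (M + e)) := by
            rw [← Real.rpow_add hxpos, mul_assoc, ← Real.rpow_add hxpos]
            congr 2
            simp only [hMdef]; ring
        _ ≤ (1 + C₀) * (((1 + ‖x‖) / 2) ^ (-((d : ℝ) + 1)) * R ^ (M + e)) := by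
            apply mul_le_mul_of_nonneg_left _ (by linarith : (0:ℝ) ≤ 1 + C₀)
            apply mul_le_mul
            · apply Real.rpow_le_rpow_of_nonpos (by linarith) (by linarith)
              linarith [Nat.cast_nonneg (α := ℝ) d]
            · exact Real.rpow_le_rpow_of_nonpos hRpos hxR hMe0
            · exact Real.rpow_nonneg hxpos.le _
            · exact Real.rpow_nonneg (by positivity) _
        _ = A * (1 + ‖x‖) ^ (-((d : ℝ) + 1)) := by
            rw [Real.div_rpow (by positivity) (by norm_num), hAdef]
            rw [div_eq_mul_inv, ← Real.rpow_neg (by norm_num : (0:ℝ) ≤ 2), neg_neg]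
            ring
    -- integral bound
    have hIbound : (∫ x in (Metric.ball (0 : EuclideanSpace ℝ (Fin d)) R)ᶜ,
        (1 + ‖iteratedFDeriv ℝ 2 V x‖) * Real.exp (-(2 / σ ^ 2) * V x)) ≤ A * J := by
      have hmeas : MeasurableSet (Metric.ball (0 : EuclideanSpace ℝ (Fin d)) R)ᶜ :=
        Metric.isOpen_ball.measurableSet.compl
      have hGint : Integrable (fun x : EuclideanSpace ℝ (Fin d) =>
          A * (1 + ‖x‖) ^ (-((d : ℝ) + 1))) := hbase.const_mul A
      calc (∫ x in (Metric.ball (0 : EuclideanSpace ℝ (Fin d)) R)ᶜ,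
            (1 + ‖iteratedFDeriv ℝ 2 V x‖) * Real.exp (-(2 / σ ^ 2) * V x))
          ≤ ∫ x in (Metric.ball (0 : EuclideanSpace ℝ (Fin d)) R)ᶜ,
            A * (1 + ‖x‖) ^ (-((d : ℝ) + 1)) := by
            apply integral_mono_of_nonneg
            · exact Eventually.of_forall fun x => by positivity
            · exact hGint.restrict
            · exact (ae_restrict_iff' hmeas).mpr (Eventually.of_forall hpt)
        _ ≤ ∫ x : EuclideanSpace ℝ (Fin d), A * (1 + ‖x‖) ^ (-((d : ℝ) + 1)) := by
            apply setIntegral_le_integral hGint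
            exact Eventually.of_forall fun x => by positivity
        _ = A * J := by rw [hJdef, integral_const_mul]
    -- put everything together
    have hZinv : 1 / Z σ ≤ 1 / (C * σ ^ d) :=
      one_div_le_one_div_of_le (by positivity) (hZlow σ ⟨hσpos, hσ1⟩)
    have hI0 : 0 ≤ ∫ x in (Metric.ball (0 : EuclideanSpace ℝ (Fin d)) R)ᶜ,
        (1 + ‖iteratedFDeriv ℝ 2 V x‖) * Real.exp (-(2 / σ ^ 2) * V x) :=
      integral_nonneg fun x => by positivity
    have step1 : (1 / Z σ) * ∫ x in (Metric.ball (0 : EuclideanSpace ℝ (Fin d)) R)ᶜ,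
        (1 + ‖iteratedFDeriv ℝ 2 V x‖) * Real.exp (-(2 / σ ^ 2) * V x)
        ≤ (1 / (C * σ ^ d)) * (A * J) := by
      apply mul_le_mul hZinv hIbound hI0 (by positivity)
    refine le_trans step1 (le_of_eq ?_)
    -- algebraic identity
    have hpowd : ((σ : ℝ) ^ d)⁻¹ = ((σ ^ 2)⁻¹) ^ ((d : ℝ) / 2) := by
      rw [← Real.rpow_natCast σ d, ← Real.rpow_neg hσpos.le]
      rw [← Real.rpow_natCast σ 2, ← Real.rpow_neg hσpos.le,
        ← Real.rpow_mul hσpos.le]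
      congr 1
      push_cast
      ring
    have hRe : R ^ e = Real.exp (-c * (σ ^ 2)⁻¹) := by
      rw [Real.rpow_def_of_pos hRpos]
      congr 1
      simp only [hedef, hcdef]
      field_simp
    have hRMe : R ^ (M + e) = R ^ M * R ^ e := Real.rpow_add hRpos _ _
    rw [hAdef, hRMe, hRe, hKdef]
    rw [one_div, mul_inv, hpowd]
    field_simp
end

section
/- Let b : ℝ^d → ℝ^d be locally Lipschitz with (b(x)-b(y), x-y) < 0 for all x ≠ y in the ball B(z, 3R), and such that (b(x)-b(y), x-y) ≤ -c|x-y|² for some c > 0 whenever x,y ∈ B(z,2R) with |x-y| ≥ R/9. Consider the deterministic flow φ_t with forcing chosen so that z is a fixed point (i.e. the solution of dX/dt = b(X) - b(z)). Then: (i) t ↦ |φ_t(x) - z| is non-increasing for x ∈ B(z,R); (ii) if T₀ satisfies e^{-cT₀} ≤ 1/9, then |φ_{T₀}(x) - z| ≤ R/9 for every x ∈ B(z,R); consequently diam(φ_{T₀}(B(z,R))) ≤ 2R/9 ≤ R/4. -/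
theorem stmt12 {d : ℕ} (b : EuclideanSpace ℝ (Fin d) → EuclideanSpace ℝ (Fin d))
    (hb : LocallyLipschitz b) (z : EuclideanSpace ℝ (Fin d)) (R c : ℝ)
    (hR : 0 < R) (hc : 0 < c)
    (hmon : ∀ x ∈ Metric.ball z (3 * R), ∀ y ∈ Metric.ball z (3 * R), x ≠ y →
      (inner ℝ (b x - b y) (x - y) : ℝ) < 0)
    (hmon' : ∀ x ∈ Metric.ball z (2 * R), ∀ y ∈ Metric.ball z (2 * R),
      R / 9 ≤ ‖x - y‖ → (inner ℝ (b x - b y) (x - y) : ℝ) ≤ -c * ‖x - y‖ ^ 2)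
    (φ : ℝ → EuclideanSpace ℝ (Fin d) → EuclideanSpace ℝ (Fin d))
    (hφ0 : ∀ x, φ 0 x = x)
    (hode : ∀ (x : EuclideanSpace ℝ (Fin d)) (t : ℝ),
      HasDerivAt (fun s => φ s x) (b (φ t x) - b z) t) :
    (∀ x ∈ Metric.ball z R, AntitoneOn (fun t => ‖φ t x - z‖) (Set.Ici (0 : ℝ))) ∧
      ∀ T₀ : ℝ, 0 ≤ T₀ → Real.exp (-c * T₀) ≤ 1 / 9 →
        (∀ x ∈ Metric.ball z R, ‖φ T₀ x - z‖ ≤ R / 9) ∧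
          Metric.diam (φ T₀ '' Metric.ball z R) ≤ R / 4 := by
  have hz3 : z ∈ Metric.ball z (3 * R) := by
    simp only [Metric.mem_ball, dist_self]; positivity
  have hz2 : z ∈ Metric.ball z (2 * R) := by
    simp only [Metric.mem_ball, dist_self]; positivity
  -- derivative of the squared distance
  have hder : ∀ (x : EuclideanSpace ℝ (Fin d)) (t : ℝ),
      HasDerivAt (fun s => ‖φ s x - z‖ ^ 2)
        (2 * (inner ℝ (b (φ t x) - b z) (φ t x - z) : ℝ)) t := by
    intro x t
    have h2 : HasDerivAt (fun s => φ s x - z) (b (φ t x) - b z) t :=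
      (hode x t).sub_const z
    have h3 := h2.inner ℝ h2
    simp only [real_inner_self_eq_norm_sq] at h3
    refine h3.congr_deriv ?_
    rw [real_inner_comm]
    ring
  have hcont : ∀ x, Continuous (fun s : ℝ => ‖φ s x - z‖ ^ 2) := fun x =>
    continuous_iff_continuousAt.2 fun t => (hder x t).continuousAt
  have hkey : ∀ x t, ‖φ t x - z‖ < 3 * R →
      (inner ℝ (b (φ t x) - b z) (φ t x - z) : ℝ) ≤ 0 := by
    intro x t ht
    by_cases h : φ t x = z
    · simp [h]
    · exact le_of_lt (hmon _ (by simpa [Metric.mem_ball, dist_eq_norm] using ht) z hz3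
        (fun hzz => h hzz))
  -- Stage 1: the squared distance never exceeds its initial value
  have stage1 : ∀ x ∈ Metric.ball z R, ∀ t, 0 ≤ t →
      ‖φ t x - z‖ ^ 2 ≤ ‖x - z‖ ^ 2 := by
    intro x hx t ht
    by_contra hcon
    push_neg at hcon
    set g : ℝ → ℝ := fun s => ‖φ s x - z‖ ^ 2 with hg
    have hg0 : g 0 = ‖x - z‖ ^ 2 := by simp [hg, hφ0]
    have hxR : ‖x - z‖ < R := by simpa [Metric.mem_ball, dist_eq_norm] using hx
    set K : ℝ := (g 0 + min (g t) (R ^ 2)) / 2 with hK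
    have hmin : g 0 < min (g t) (R ^ 2) := by
      refine lt_min ?_ ?_
      · rw [hg0]; exact hcon
      · rw [hg0]; nlinarith [norm_nonneg (x - z)]
    have hK1 : g 0 < K := by rw [hK]; linarith
    have hK2 : K < g t := by
      have := min_le_left (g t) (R ^ 2); rw [hK]; linarith
    have hKR : K < R ^ 2 := by
      have := min_le_right (g t) (R ^ 2); rw [hK]; linarith
    set A : Set ℝ := Set.Icc 0 t ∩ {s | K ≤ g s} with hA
    have hAclosed : IsClosed A :=
      isClosed_Icc.inter (isClosed_le continuous_const (hcont x))
    have hAne : A.Nonempty := ⟨t, ⟨ht, le_rfl⟩, hK2.le⟩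
    have hAbdd : BddBelow A := ⟨0, fun y hy => hy.1.1⟩
    set s₀ : ℝ := sInf A with hs₀
    have hs₀A : s₀ ∈ A := hAclosed.csInf_mem hAne hAbdd
    have hs₀pos : 0 < s₀ := by
      rcases lt_or_eq_of_le hs₀A.1.1 with h | h
      · exact h
      · exfalso
        have h2 : K ≤ g s₀ := hs₀A.2
        rw [← h] at h2
        linarith
    have hlt : ∀ s ∈ Set.Ioo 0 s₀, g s < K := by
      intro s hs
      by_contra hge
      push_neg at hge
      have hsA : s ∈ A := ⟨⟨hs.1.le, le_trans hs.2.le hs₀A.1.2⟩, hge⟩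
      exact absurd (csInf_le hAbdd hsA) (not_le.2 hs.2)
    have hanti : AntitoneOn g (Set.Icc 0 s₀) := by
      apply antitoneOn_of_deriv_nonpos (convex_Icc 0 s₀) (hcont x).continuousOn
      · intro s _
        exact (hder x s).differentiableAt.differentiableWithinAt
      · intro s hs
        rw [interior_Icc] at hs
        have h1 : g s < K := hlt s hs
        have h2 : ‖φ s x - z‖ < 3 * R := by
          have : ‖φ s x - z‖ ^ 2 < R ^ 2 := lt_trans h1 hKR
          nlinarith [norm_nonneg (φ s x - z)]
        rw [(hder x s).deriv]
        have := hkey x s h2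
        linarith
    have hle0 : g s₀ ≤ g 0 :=
      hanti (Set.left_mem_Icc.2 hs₀pos.le) (Set.right_mem_Icc.2 hs₀pos.le) hs₀pos.le
    have hKs : K ≤ g s₀ := hs₀A.2
    linarith
  -- Part (i): antitone
  have anti : ∀ x ∈ Metric.ball z R,
      AntitoneOn (fun t => ‖φ t x - z‖) (Set.Ici (0 : ℝ)) := by
    intro x hx
    have hxR : ‖x - z‖ < R := by simpa [Metric.mem_ball, dist_eq_norm] using hx
    have anti2 : AntitoneOn (fun t => ‖φ t x - z‖ ^ 2) (Set.Ici (0 : ℝ)) := by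
      apply antitoneOn_of_deriv_nonpos (convex_Ici 0) (hcont x).continuousOn
      · intro s _
        exact (hder x s).differentiableAt.differentiableWithinAt
      · intro s hs
        rw [interior_Ici] at hs
        have h1 := stage1 x hx s (le_of_lt hs)
        have hun : ‖φ s x - z‖ ≤ ‖x - z‖ :=
          le_of_pow_le_pow_left₀ two_ne_zero (norm_nonneg _) h1
        have h2 : ‖φ s x - z‖ < 3 * R := by linarith
        rw [(hder x s).deriv]
        have := hkey x s h2
        linarith
    intro a ha bb hb hab
    have := anti2 ha hb hab
    exact le_of_pow_le_pow_left₀ two_ne_zero (norm_nonneg _) this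
  refine ⟨anti, ?_⟩
  intro T₀ hT₀ hexp
  have main : ∀ x ∈ Metric.ball z R, ‖φ T₀ x - z‖ ≤ R / 9 := by
    intro x hx
    have hxR : ‖x - z‖ < R := by simpa [Metric.mem_ball, dist_eq_norm] using hx
    by_cases hcase : ∃ t ∈ Set.Icc 0 T₀, ‖φ t x - z‖ ≤ R / 9
    · obtain ⟨t, ht, hle⟩ := hcase
      exact le_trans (anti x hx ht.1 (Set.mem_Ici.2 hT₀) ht.2) hle
    · push_neg at hcase
      -- Gronwall estimate
      set h : ℝ → ℝ := fun s => ‖φ s x - z‖ ^ 2 * Real.exp (2 * c * s) with hh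
      have hderh : ∀ s : ℝ, HasDerivAt h
          (2 * (inner ℝ (b (φ s x) - b z) (φ s x - z) : ℝ) * Real.exp (2 * c * s)
            + ‖φ s x - z‖ ^ 2 * (Real.exp (2 * c * s) * (2 * c))) s := by
        intro s
        have he : HasDerivAt (fun s : ℝ => Real.exp (2 * c * s))
            (Real.exp (2 * c * s) * (2 * c)) s := by
          have : HasDerivAt (fun s : ℝ => 2 * c * s) (2 * c) s := by
            simpa using (hasDerivAt_id s).const_mul (2 * c)
          exact this.exp
        exact (hder x s).mul he
      have hantih : AntitoneOn h (Set.Icc 0 T₀) := by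
        apply antitoneOn_of_deriv_nonpos (convex_Icc 0 T₀)
        · exact (continuous_iff_continuousAt.2 fun s => (hderh s).continuousAt).continuousOn
        · intro s _
          exact (hderh s).differentiableAt.differentiableWithinAt
        · intro s hs
          rw [interior_Icc] at hs
          have hs0 : (0:ℝ) ≤ s := hs.1.le
          have hsq := stage1 x hx s hs0
          have hnorm : ‖φ s x - z‖ < R := by
            have hun : ‖φ s x - z‖ ≤ ‖x - z‖ :=
              le_of_pow_le_pow_left₀ two_ne_zero (norm_nonneg _) hsq
            linarith
          have hmem1 : φ s x ∈ Metric.ball z (2 * R) := by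
            simp only [Metric.mem_ball, dist_eq_norm]; linarith
          have hge : R / 9 ≤ ‖φ s x - z‖ :=
            (hcase s ⟨hs0, hs.2.le⟩).le
          have hI := hmon' (φ s x) hmem1 z hz2 hge
          rw [(hderh s).deriv]
          have hE := Real.exp_pos (2 * c * s)
          nlinarith [hE.le, sq_nonneg (‖φ s x - z‖)]
      have hfin : h T₀ ≤ h 0 :=
        hantih (Set.left_mem_Icc.2 hT₀) (Set.right_mem_Icc.2 hT₀) hT₀
      have hh0 : h 0 = ‖x - z‖ ^ 2 := by simp [hh, hφ0]
      set E : ℝ := Real.exp (-c * T₀) with hE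
      have hEpos : 0 < E := Real.exp_pos _
      have hprod : Real.exp (2 * c * T₀) * E ^ 2 = 1 := by
        rw [hE, sq, ← Real.exp_add, ← Real.exp_add,
          show 2 * c * T₀ + (-c * T₀ + -c * T₀) = 0 by ring, Real.exp_zero]
      have hgT : ‖φ T₀ x - z‖ ^ 2 * Real.exp (2 * c * T₀) ≤ ‖x - z‖ ^ 2 := by
        rw [← hh0]; exact hfin
      have hgoal : ‖φ T₀ x - z‖ ^ 2 ≤ (R / 9) ^ 2 := by
        have k1 : ‖φ T₀ x - z‖ ^ 2
            = (‖φ T₀ x - z‖ ^ 2 * Real.exp (2 * c * T₀)) * E ^ 2 := by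
          rw [mul_assoc, hprod, mul_one]
        have k2 : (‖φ T₀ x - z‖ ^ 2 * Real.exp (2 * c * T₀)) * E ^ 2
            ≤ ‖x - z‖ ^ 2 * E ^ 2 := mul_le_mul_of_nonneg_right hgT (sq_nonneg E)
        have k3 : ‖x - z‖ ^ 2 * E ^ 2 ≤ R ^ 2 * (1 / 9) ^ 2 := by
          apply mul_le_mul (by nlinarith [norm_nonneg (x - z)])
            (by nlinarith) (sq_nonneg E) (sq_nonneg R)
        have k4 : (R / 9) ^ 2 = R ^ 2 * (1 / 9) ^ 2 := by ring
        linarith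
      exact le_of_pow_le_pow_left₀ two_ne_zero (by positivity) hgoal
  refine ⟨main, ?_⟩
  apply Metric.diam_le_of_forall_dist_le (by positivity)
  rintro p ⟨x, hx, rfl⟩ q ⟨y, hy, rfl⟩
  have h1 := main x hx
  have h2 := main y hy
  calc dist (φ T₀ x) (φ T₀ y) ≤ dist (φ T₀ x) z + dist z (φ T₀ y) := dist_triangle _ _ _
    _ ≤ R / 4 := by
        rw [dist_eq_norm, dist_comm, dist_eq_norm]
        linarith
end
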